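/- Let q be a power of an odd prime with q ≡ 1 (mod 3) and F = 𝔽_q. In the graph R, any two vertices at graph distance 2 from each other have distinct first components. -/

import Mathlib

/-- Vertices: points (left component) and lines (right component), each a triple over `F`. -/
abbrev Vtx (F : Type) := (F × F × F) ⊕ (F × F × F)

/-- Adjacency for the graph `Γ_F(p₁ℓ₁, g(p₁,p₂,ℓ₁))`: a point `(p₁,p₂,p₃)` and a line
`[ℓ₁,ℓ₂,ℓ₃]` are adjacent iff `p₂+ℓ₂ = p₁ℓ₁` and `p₃+ℓ₃ = g(p₁,p₂,ℓ₁)`. -/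
def gammaAdj (F : Type) [Field F] (g : F → F → F → F) : Vtx F → Vtx F → Prop
  | Sum.inl p, Sum.inr l => p.2.1 + l.2.1 = p.1 * l.1 ∧ p.2.2 + l.2.2 = g p.1 p.2.1 l.1
  | Sum.inr l, Sum.inl p => p.2.1 + l.2.1 = p.1 * l.1 ∧ p.2.2 + l.2.2 = g p.1 p.2.1 l.1
  | _, _ => False

/-- The bipartite graph `Γ_F(p₁ℓ₁, g(p₁,p₂,ℓ₁))`. -/
def Gamma (F : Type) [Field F] (g : F → F → F → F) : SimpleGraph (Vtx F) where
  Adj := gammaAdj F g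
  symm := by
    refine ⟨fun v w h => ?_⟩
    match v, w with
    | Sum.inl p, Sum.inr l => exact h
    | Sum.inr l, Sum.inl p => exact h
  loopless := by
    refine ⟨fun v h => ?_⟩
    match v with
    | Sum.inl p => exact h
    | Sum.inr l => exact h

/-- The graph `R = Γ_F(p₁ℓ₁, p₁p₂ℓ₁(p₁+p₂+p₁p₂))`. -/
def RGraph (F : Type) [Field F] : SimpleGraph (Vtx F) :=
  Gamma F (fun p1 p2 l1 => p1 * p2 * l1 * (p1 + p2 + p1 * p2))

/-- Let `q` be a power of an odd prime with `q ≡ 1 (mod 3)` and `F = 𝔽_q`. In the graph `R`,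
any two vertices at graph distance 2 have distinct first components. -/
theorem dist_two_first_components_ne (q p e : ℕ) (hp : p.Prime) (hodd : Odd p) (he : 1 ≤ e)
    (hq : q = p ^ e) (hmod : q % 3 = 1) (F : Type) [Field F] [Fintype F]
    (hcard : Fintype.card F = q) (v w : Vtx F) (hdist : (RGraph F).dist v w = 2) :
    Sum.elim (Prod.fst : F × F × F → F) (Prod.fst : F × F × F → F) v ≠
      Sum.elim (Prod.fst : F × F × F → F) (Prod.fst : F × F × F → F) w := by

  intro hfst
  have hvw : v ≠ w := by
    intro h; subst h; simp [SimpleGraph.dist_self] at hdist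
  have hreach : (RGraph F).Reachable v w := by
    by_contra h
    rw [SimpleGraph.dist_eq_zero_of_not_reachable h] at hdist
    exact absurd hdist (by norm_num)
  obtain ⟨W, hW⟩ := hreach.exists_walk_length_eq_dist
  rw [hdist] at hW
  cases W with
  | nil => simp at hW
  | cons h₁ W' =>
    cases W' with
    | nil => simp at hW
    | cons h₂ W'' =>
      cases W'' with
      | cons h₃ W''' => simp [SimpleGraph.Walk.length_cons] at hW
      | nil =>
        rename_i u
        rcases v with ⟨p1, p2, p3⟩ | ⟨l1, l2, l3⟩ <;>
          rcases u with ⟨a1, a2, a3⟩ | ⟨b1, b2, b3⟩ <;>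
          rcases w with ⟨c1, c2, c3⟩ | ⟨d1, d2, d3⟩ <;>
          simp only [RGraph, Gamma, gammaAdj, Sum.elim_inl, Sum.elim_inr] at h₁ h₂ hfst <;>
          try exact h₁.elim
        · apply hvw
          subst hfst
          obtain ⟨e1, e2⟩ := h₁
          obtain ⟨f1, f2⟩ := h₂
          have h2 : p2 = c2 := by linear_combination e1 - f1
          subst h2
          have h3 : p3 = c3 := by linear_combination e2 - f2
          subst h3; rfl
        · apply hvw
          subst hfst
          obtain ⟨e1, e2⟩ := h₁
          obtain ⟨f1, f2⟩ := h₂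
          have h2 : l2 = d2 := by linear_combination e1 - f1
          subst h2
          have h3 : l3 = d3 := by linear_combination e2 - f2
          subst h3; rfl
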